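/- Let λ ∈ ℝ, r ≥ 0 a constant, and G_λ(x) = x^3/8 − λx^2/2 + λ^2 x/2. For a ≥ max(1, 3λ), the improper integral ∫_a^∞ y^r e^{−G_λ(y)} dy equals (a^r / G_λ'(a)) · e^{−G_λ(a)} · (1 + E) where |E| ≤ C(r)/a^3 for a constant C(r) depending only on r. -/

import Mathlib

open MeasureTheory Set Real Filter Topology
open MeasureTheory Set Real Filter

/- ## Auxiliary lemmas -/

lemma my_shift_indicator (h : ℝ → ℝ) (a : ℝ) :
    (Ioi a).indicator (fun y => h (y - a)) = fun y => (Ioi 0).indicator h (y - a) := by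
  funext y
  by_cases hy : a < y
  · rw [Set.indicator_of_mem (Set.mem_Ioi.2 hy), Set.indicator_of_mem (Set.mem_Ioi.2 (by linarith))]
  · rw [Set.indicator_of_notMem (by simpa using hy),
      Set.indicator_of_notMem (by simp; linarith [not_lt.1 hy])]

lemma my_shift_int (h : ℝ → ℝ) (a : ℝ) (hint : IntegrableOn h (Set.Ioi 0)) :
    IntegrableOn (fun y => h (y - a)) (Set.Ioi a) := by
  have h1 : Integrable ((Ioi a).indicator fun y => h (y - a)) := by
    rw [my_shift_indicator]
    exact ((integrable_indicator_iff measurableSet_Ioi).2 hint).comp_sub_right a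
  exact (integrable_indicator_iff measurableSet_Ioi).1 h1

lemma my_shift_eq (h : ℝ → ℝ) (a : ℝ) :
    ∫ y in Set.Ioi a, h (y - a) = ∫ s in Set.Ioi 0, h s := by
  rw [← integral_indicator measurableSet_Ioi, ← integral_indicator measurableSet_Ioi,
    my_shift_indicator]
  exact integral_sub_right_eq_self ((Ioi (0:ℝ)).indicator h) a

lemma my_int_exp_val (β : ℝ) (hβ : 0 < β) : ∫ s in Ioi (0:ℝ), exp (-(β * s)) = 1 / β := by
  have h := integral_rpow_mul_exp_neg_mul_rpow (p := 1) (q := 0) one_pos (by norm_num) hβ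
  simp_rw [Real.rpow_one, Real.rpow_zero, one_mul, neg_mul] at h
  rw [h, show -(0+1)/1 = -(1:ℝ) by norm_num, show (0:ℝ)+1 = 1 by norm_num,
    show (1:ℝ)/1 = 1 by norm_num, Real.Gamma_one, Real.rpow_neg hβ.le, Real.rpow_one]
  field_simp

lemma my_int_rpow_exp_val (r β : ℝ) (hr : 0 ≤ r) (hβ : 0 < β) :
    ∫ s in Ioi (0:ℝ), s ^ r * exp (-(β * s)) = Real.Gamma (r + 1) / β ^ (r + 1) := by
  have h := integral_rpow_mul_exp_neg_mul_rpow (p := 1) (q := r) one_pos (by linarith) hβ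
  simp_rw [Real.rpow_one, neg_mul] at h
  rw [h, show -(r+1)/1 = -(r+1) by ring, show (r+1)/1 = r+1 by ring,
    Real.rpow_neg hβ.le]
  ring

lemma my_exp_intOn (β : ℝ) (hβ : 0 < β) :
    IntegrableOn (fun s : ℝ => exp (-(β * s))) (Ioi (0:ℝ)) := by
  simpa [neg_mul] using exp_neg_integrableOn_Ioi 0 hβ

lemma my_rpow_exp_intOn (r β : ℝ) (hr : 0 ≤ r) (hβ : 0 < β) :
    IntegrableOn (fun s : ℝ => s ^ r * exp (-(β * s))) (Ioi (0:ℝ)) := by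
  have := integrableOn_rpow_mul_exp_neg_mul_rpow (p := 1) (s := r) (b := β)
    (by linarith) one_pos hβ
  simpa [Real.rpow_one, neg_mul] using this

lemma my_int_integrable (r β : ℝ) (hr : 0 ≤ r) (hβ : 0 < β) :
    IntegrableOn (fun s => (1 + s ^ r) * exp (-(β * s))) (Ioi (0:ℝ)) := by
  refine ((my_exp_intOn β hβ).add (my_rpow_exp_intOn r β hr hβ)).congr ?_
  filter_upwards with s
  simp [add_mul]

lemma my_int_one_add_val (r β : ℝ) (hr : 0 ≤ r) (hβ : 0 < β) :
    ∫ s in Ioi (0:ℝ), (1 + s ^ r) * exp (-(β * s))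
      = 1 / β + Real.Gamma (r + 1) / β ^ (r + 1) := by
  rw [show (fun s : ℝ => (1 + s ^ r) * exp (-(β * s)))
      = fun s : ℝ => exp (-(β * s)) + s ^ r * exp (-(β * s)) by funext s; ring]
  rw [integral_add (my_exp_intOn β hβ) (my_rpow_exp_intOn r β hr hβ),
    my_int_exp_val β hβ, my_int_rpow_exp_val r β hr hβ]

lemma my_glow (lam y : ℝ) (h1 : 1 ≤ y) (h2 : 3*lam ≤ y) :
    y^2/11 ≤ 3*y^2/8 - lam*y + lam^2/2 := by
  nlinarith [sq_nonneg (y - 3*lam), sq_nonneg lam, sq_nonneg (y - lam)]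

lemma my_gpp (lam y : ℝ) (h1 : 1 ≤ y) (h2 : 3*lam ≤ y) :
    (3*y/4 - lam) * y ≤ 11 * (3*y^2/8 - lam*y + lam^2/2) := by
  nlinarith [mul_nonneg (by linarith : (0:ℝ) ≤ y) (by linarith : (0:ℝ) ≤ y - 3*lam), sq_nonneg lam]

lemma my_Glow (lam y : ℝ) (h1 : 1 ≤ y) (h2 : 3*lam ≤ y) :
    y^3/72 ≤ y^3/8 - lam*y^2/2 + lam^2*y/2 := by
  nlinarith [mul_nonneg (by linarith : (0:ℝ) ≤ y) (sq_nonneg (y - 3*lam)),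
    mul_nonneg (by linarith : (0:ℝ) ≤ y) (sq_nonneg (y - 2*lam)), sq_nonneg (y - 3*lam)]

lemma my_Gconv (lam a y : ℝ) (h1 : 1 ≤ a) (h2 : 3*lam ≤ a) (h3 : a ≤ y) :
    (a^3/8 - lam*a^2/2 + lam^2*a/2) + (3*a^2/8 - lam*a + lam^2/2) * (y - a)
      ≤ y^3/8 - lam*y^2/2 + lam^2*y/2 := by
  nlinarith [mul_nonneg (mul_nonneg (by linarith : (0:ℝ) ≤ y - a)
      (by linarith : (0:ℝ) ≤ y - a)) (by linarith : (0:ℝ) ≤ y - a),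
    mul_nonneg (sq_nonneg (y - a)) (by linarith : (0:ℝ) ≤ 3*a/4 - lam)]

lemma my_hasDeriv_g (lam y : ℝ) :
    HasDerivAt (fun x : ℝ => 3*x^2/8 - lam*x + lam^2/2) (3*y/4 - lam) y := by
  have h := ((((hasDerivAt_pow 2 y).const_mul (3:ℝ)).div_const 8).sub
    ((hasDerivAt_id y).const_mul lam)).add_const (lam^2/2)
  refine h.congr_deriv ?_
  push_cast; ring

lemma my_hasDeriv_G (lam y : ℝ) :
    HasDerivAt (fun x : ℝ => x^3/8 - lam*x^2/2 + lam^2*x/2)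
      (3*y^2/8 - lam*y + lam^2/2) y := by
  have h := (((hasDerivAt_pow 3 y).div_const 8).sub
    (((hasDerivAt_pow 2 y).const_mul lam).div_const 2)).add
    (((hasDerivAt_id y).const_mul (lam^2)).div_const 2)
  refine h.congr_deriv ?_
  push_cast; ring

lemma my_hasDeriv_F (r lam y : ℝ) (hy : 0 < y) (hg : 3*y^2/8 - lam*y + lam^2/2 ≠ 0) :
    HasDerivAt (fun x : ℝ => x ^ r / (3*x^2/8 - lam*x + lam^2/2)
        * Real.exp (-(x^3/8 - lam*x^2/2 + lam^2*x/2)))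
      ((r * y^(r-1) / (3*y^2/8 - lam*y + lam^2/2)
          - y^r * (3*y/4 - lam) / (3*y^2/8 - lam*y + lam^2/2)^2)
            * Real.exp (-(y^3/8 - lam*y^2/2 + lam^2*y/2))
        - y ^ r * Real.exp (-(y^3/8 - lam*y^2/2 + lam^2*y/2))) y := by
  have h_pow : HasDerivAt (fun x : ℝ => x ^ r) (r * y^(r-1)) y :=
    Real.hasDerivAt_rpow_const (Or.inl hy.ne')
  have h_exp : HasDerivAt (fun x : ℝ => Real.exp (-(x^3/8 - lam*x^2/2 + lam^2*x/2)))
      (Real.exp (-(y^3/8 - lam*y^2/2 + lam^2*y/2)) * (-(3*y^2/8 - lam*y + lam^2/2))) y :=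
    ((my_hasDeriv_G lam y).neg).exp
  have h := (h_pow.div (my_hasDeriv_g lam y) hg).mul h_exp
  refine h.congr_deriv ?_
  simp only [Pi.div_apply]
  generalize hP : 3*y^2/8 - lam*y + lam^2/2 = P at hg ⊢
  generalize y ^ (r-1) = Q
  generalize y ^ r = R
  generalize Real.exp (-(y^3/8 - lam*y^2/2 + lam^2*y/2)) = E
  field_simp
  ring
lemma my_rpow_add (r s : ℝ) (hr : 0 ≤ r) (hs : 0 ≤ s) :
    (1+s) ^ r ≤ 2 ^ r * (1 + s ^ r) := by
  have h2 : (0:ℝ) < 2 ^ r := Real.rpow_pos_of_pos two_pos r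
  have hsr : 0 ≤ s ^ r := Real.rpow_nonneg hs r
  rcases le_or_gt s 1 with h | h
  · have h1 : (1+s) ^ r ≤ 2 ^ r := Real.rpow_le_rpow (by linarith) (by linarith) hr
    nlinarith
  · have h1 : (1+s) ^ r ≤ (2*s) ^ r := Real.rpow_le_rpow (by linarith) (by linarith) hr
    have h2' : (2*s) ^ r = 2 ^ r * s ^ r := Real.mul_rpow (by norm_num) (by linarith)
    nlinarith

noncomputable def myG (lam y : ℝ) : ℝ := y^3/8 - lam*y^2/2 + lam^2*y/2
noncomputable def myg (lam y : ℝ) : ℝ := 3*y^2/8 - lam*y + lam^2/2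

set_option maxHeartbeats 2000000 in
lemma master (r : ℝ) (hr : 0 ≤ r) (lam a : ℝ) (ha1 : 1 ≤ a) (ha3 : 3*lam ≤ a) :
    ∃ J : ℝ,
      (∫ y in Ioi a, y ^ r * Real.exp (-(myG lam y)))
        = a ^ r / myg lam a * Real.exp (-(myG lam a)) + J ∧
      |J| ≤ (11*r+121)/a^3 * ∫ y in Ioi a, y ^ r * Real.exp (-(myG lam y)) ∧
      (∫ y in Ioi a, y ^ r * Real.exp (-(myG lam y)))
        ≤ 2^r * (1 + 11^r * Real.Gamma (r+1))
            * (a ^ r / myg lam a * Real.exp (-(myG lam a))) := by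
  have ha0 : (0:ℝ) < a := lt_of_lt_of_le one_pos ha1
  -- pointwise facts
  have hglow : ∀ y : ℝ, a ≤ y → y^2/11 ≤ myg lam y := by
    intro y hy
    have h1 : 1 ≤ y := ha1.trans hy
    unfold myg
    nlinarith [sq_nonneg (y - 3*lam), sq_nonneg lam, sq_nonneg (y - lam)]
  have hgpos : ∀ y : ℝ, a ≤ y → 0 < myg lam y := by
    intro y hy
    have h1 : 1 ≤ y := ha1.trans hy
    have := hglow y hy
    nlinarith
  have hGlow : ∀ y : ℝ, a ≤ y → y^3/72 ≤ myG lam y := by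
    intro y hy
    have h1 : 1 ≤ y := ha1.trans hy
    have h2 : 3*lam ≤ y := ha3.trans hy
    unfold myG
    nlinarith [mul_nonneg (by linarith : (0:ℝ) ≤ y) (sq_nonneg (y - 3*lam)),
      mul_nonneg (by linarith : (0:ℝ) ≤ y) (sq_nonneg (y - 2*lam)), sq_nonneg (y - 3*lam)]
  have hgg_pos : ∀ y : ℝ, a ≤ y → 0 < 3*y/4 - lam := by
    intro y hy
    have h1 : 1 ≤ y := ha1.trans hy
    have h2 : 3*lam ≤ y := ha3.trans hy
    nlinarith
  have hgg_le : ∀ y : ℝ, a ≤ y → (3*y/4 - lam) * y ≤ 11 * myg lam y := by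
    intro y hy
    have h1 : 1 ≤ y := ha1.trans hy
    have h2 : 3*lam ≤ y := ha3.trans hy
    unfold myg
    nlinarith [mul_nonneg (by linarith : (0:ℝ) ≤ y) (by linarith : (0:ℝ) ≤ y - 3*lam),
      sq_nonneg lam]
  have hfnn : ∀ y : ℝ, a ≤ y → 0 ≤ y ^ r * Real.exp (-(myG lam y)) := by
    intro y hy
    have h1 : (0:ℝ) ≤ y := by linarith [ha1.trans hy]
    positivity
  -- continuity
  have hcont_rpow : Continuous (fun y : ℝ => y ^ r) := by
    rw [continuous_iff_continuousAt]
    exact fun y => Real.continuousAt_rpow_const y r (Or.inr hr)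
  have hcontG : Continuous (fun y : ℝ => Real.exp (-(myG lam y))) := by
    apply Real.continuous_exp.comp
    unfold myG
    fun_prop
  have hcontf : Continuous (fun y : ℝ => y ^ r * Real.exp (-(myG lam y))) :=
    hcont_rpow.mul hcontG
  -- integrability of the integrand
  have hfint : IntegrableOn (fun y : ℝ => y ^ r * Real.exp (-(myG lam y))) (Ioi a) := by
    have hbint : IntegrableOn (fun y : ℝ => y ^ r * Real.exp (-(1/72) * y ^ (3:ℝ))) (Ioi a) := by
      exact (integrableOn_rpow_mul_exp_neg_mul_rpow (by linarith : (-1:ℝ) < r)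
        (by norm_num : (0:ℝ) < 3) (by norm_num : (0:ℝ) < 1/72)).mono_set
        (Ioi_subset_Ioi ha0.le)
    refine Integrable.mono' hbint hcontf.aestronglyMeasurable ?_
    filter_upwards [ae_restrict_mem measurableSet_Ioi] with y hy
    have hay : a ≤ y := le_of_lt hy
    have h1 : 1 ≤ y := ha1.trans hay
    have h0 : (0:ℝ) < y := by linarith
    rw [Real.norm_eq_abs, abs_of_nonneg (hfnn y hay)]
    have h3 : y ^ (3:ℝ) = y ^ (3:ℕ) := by
      rw [show (3:ℝ) = ((3:ℕ):ℝ) by norm_num, Real.rpow_natCast]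
    rw [h3]
    have hGy := hGlow y hay
    have : (0:ℝ) ≤ y ^ r := Real.rpow_nonneg h0.le r
    gcongr
    linarith
  -- ψ bound
  have hψbound : ∀ y : ℝ, a ≤ y →
      |(r * y^(r-1) / myg lam y - y^r * (3*y/4 - lam) / (myg lam y)^2)
          * Real.exp (-(myG lam y))|
        ≤ (11*r+121)/a^3 * (y ^ r * Real.exp (-(myG lam y))) := by
    intro y hy
    have h1 : 1 ≤ y := ha1.trans hy
    have h0 : (0:ℝ) < y := by linarith
    have hP : 0 < myg lam y := hgpos y hy
    have hP11 : y^2 ≤ 11 * myg lam y := by linarith [hglow y hy]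
    have hggp := hgg_pos y hy
    have hggl := hgg_le y hy
    have hT : (0:ℝ) < y ^ r := Real.rpow_pos_of_pos h0 r
    have hE : (0:ℝ) < Real.exp (-(myG lam y)) := Real.exp_pos _
    have hyr1 : y ^ (r-1) = y ^ r / y := by
      rw [Real.rpow_sub h0, Real.rpow_one]
    have hay3 : a^3 ≤ y^3 := pow_le_pow_left₀ ha0.le hy 3
    have ha3p : (0:ℝ) < a^3 := by positivity
    have hy3p : (0:ℝ) < y^3 := by positivity
    have hA : r * y^(r-1) / myg lam y ≤ 11*r * y^r / y^3 := by
      rw [hyr1, div_le_div_iff₀ (by positivity) (by positivity)]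
      have h2 : r * (y ^ r) * (y^2) ≤ r * (y ^ r) * (11 * myg lam y) :=
        mul_le_mul_of_nonneg_left hP11 (by positivity)
      have hq : r * (y ^ r / y) * y ^ 3 = r * y ^ r * y ^ 2 := by
        field_simp
      rw [hq]; nlinarith [h2]
    have hB : y^r * (3*y/4 - lam) / (myg lam y)^2 ≤ 121 * y^r / y^3 := by
      rw [div_le_div_iff₀ (by positivity) (by positivity)]
      have h2 : ((3*y/4 - lam) * y) * (y^2) ≤ (11 * myg lam y) * (11 * myg lam y) :=
        mul_le_mul hggl hP11 (by positivity) (by positivity)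
      have h3 : y^r * (((3*y/4 - lam) * y) * (y^2)) ≤ y^r * ((11 * myg lam y) * (11 * myg lam y)) :=
        mul_le_mul_of_nonneg_left h2 hT.le
      nlinarith [h3]
    have hAnn : 0 ≤ r * y^(r-1) / myg lam y := by
      have : (0:ℝ) ≤ y ^ (r-1) := Real.rpow_nonneg h0.le _
      positivity
    have hBnn : 0 ≤ y^r * (3*y/4 - lam) / (myg lam y)^2 := by positivity
    have habs : |r * y^(r-1) / myg lam y - y^r * (3*y/4 - lam) / (myg lam y)^2|
        ≤ r * y^(r-1) / myg lam y + y^r * (3*y/4 - lam) / (myg lam y)^2 :=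
      abs_le.mpr ⟨by linarith, by linarith⟩
    rw [abs_mul, abs_of_pos hE]
    calc |r * y^(r-1) / myg lam y - y^r * (3*y/4 - lam) / (myg lam y)^2|
          * Real.exp (-(myG lam y))
        ≤ (r * y^(r-1) / myg lam y + y^r * (3*y/4 - lam) / (myg lam y)^2)
            * Real.exp (-(myG lam y)) := by
          exact mul_le_mul_of_nonneg_right habs hE.le
      _ ≤ (11*r * y^r / y^3 + 121 * y^r / y^3) * Real.exp (-(myG lam y)) := by
          exact mul_le_mul_of_nonneg_right (by linarith) hE.le
      _ = (11*r+121)/y^3 * (y ^ r * Real.exp (-(myG lam y))) := by ring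
      _ ≤ (11*r+121)/a^3 * (y ^ r * Real.exp (-(myG lam y))) := by
          apply mul_le_mul_of_nonneg_right _ (by positivity)
          apply div_le_div_of_nonneg_left (by linarith) ha3p hay3
  -- ψ integrable
  have hcontg : Continuous (myg lam) := by unfold myg; fun_prop
  have hgne : ∀ y ∈ Ioi a, myg lam y ≠ 0 := fun y hy => (hgpos y (le_of_lt hy)).ne'
  have hψint : IntegrableOn (fun y : ℝ =>
      (r * y^(r-1) / myg lam y - y^r * (3*y/4 - lam) / (myg lam y)^2)
        * Real.exp (-(myG lam y))) (Ioi a) := by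
    refine Integrable.mono' (hfint.const_mul ((11*r+121)/a^3)) ?_ ?_
    · apply ContinuousOn.aestronglyMeasurable _ measurableSet_Ioi
      apply ContinuousOn.mul _ hcontG.continuousOn
      apply ContinuousOn.sub
      · apply ContinuousOn.div
        · have hc1 : ContinuousOn (fun y : ℝ => y ^ (r-1)) (Ioi a) := fun y hy =>
            (Real.continuousAt_rpow_const y (r-1)
              (Or.inl (ne_of_gt (lt_of_lt_of_le ha0 (le_of_lt hy))))).continuousWithinAt
          exact continuousOn_const.mul hc1
        · exact hcontg.continuousOn
        · exact hgne
      · apply ContinuousOn.div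
        · exact hcont_rpow.continuousOn.mul (by fun_prop)
        · exact (hcontg.pow 2).continuousOn
        · exact fun y hy => pow_ne_zero 2 (hgne y hy)
    · filter_upwards [ae_restrict_mem measurableSet_Ioi] with y hy
      rw [Real.norm_eq_abs]
      exact hψbound y (le_of_lt hy)
  -- FTC
  have hFTC : (∫ y in Ioi a,
      ((r * y^(r-1) / myg lam y - y^r * (3*y/4 - lam) / (myg lam y)^2)
          * Real.exp (-(myG lam y)) - y ^ r * Real.exp (-(myG lam y))))
      = 0 - a ^ r / myg lam a * Real.exp (-(myG lam a)) := by
    have hFt : Tendsto (fun y : ℝ => y ^ r / myg lam y * Real.exp (-(myG lam y)))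
        atTop (𝓝 0) := by
      apply squeeze_zero' (g := fun y : ℝ => 11 * (y ^ r * Real.exp (-(1/72) * y)))
      · filter_upwards [eventually_ge_atTop a] with y hy
        have h0 : (0:ℝ) < y := lt_of_lt_of_le ha0 hy
        have := hgpos y hy
        positivity
      · filter_upwards [eventually_ge_atTop a] with y hy
        have h1 : 1 ≤ y := ha1.trans hy
        have h0 : (0:ℝ) < y := by linarith
        have hP : 0 < myg lam y := hgpos y hy
        have hP11 : y^2 ≤ 11 * myg lam y := by linarith [hglow y hy]
        have hT : (0:ℝ) < y ^ r := Real.rpow_pos_of_pos h0 r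
        have hdd : y ^ r / myg lam y ≤ 11 * y ^ r := by
          rw [div_le_iff₀ hP]
          have hy2 : (1:ℝ) ≤ y^2 := by nlinarith
          have h11 : (1:ℝ) ≤ 11 * myg lam y := by linarith
          nlinarith [mul_le_mul_of_nonneg_left h11 hT.le]
        have hee : Real.exp (-(myG lam y)) ≤ Real.exp (-(1/72) * y) := by
          apply Real.exp_le_exp.2
          have := hGlow y hy
          nlinarith
        calc y ^ r / myg lam y * Real.exp (-(myG lam y))
            ≤ (11 * y ^ r) * Real.exp (-(1/72) * y) :=
              mul_le_mul hdd hee (Real.exp_pos _).le (by positivity)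
          _ = 11 * (y ^ r * Real.exp (-(1/72) * y)) := by ring
      · have := (tendsto_rpow_mul_exp_neg_mul_atTop_nhds_zero r (1/72)
          (by norm_num)).const_mul (11:ℝ)
        simpa using this
    have hderiv : ∀ y ∈ Ici a, HasDerivAt
        (fun x : ℝ => x ^ r / myg lam x * Real.exp (-(myG lam x)))
        ((r * y^(r-1) / myg lam y - y^r * (3*y/4 - lam) / (myg lam y)^2)
            * Real.exp (-(myG lam y)) - y ^ r * Real.exp (-(myG lam y))) y := by
      intro y hy
      have h0 : (0:ℝ) < y := lt_of_lt_of_le ha0 hy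
      have hne : myg lam y ≠ 0 := (hgpos y hy).ne'
      have H := my_hasDeriv_F r lam y h0 (by unfold myg at hne; exact hne)
      simp only [myg, myG]
      exact H
    have h := integral_Ioi_of_hasDerivAt_of_tendsto' hderiv (hψint.sub hfint) hFt
    simpa using h
  -- split the integral
  have hsplit : (∫ y in Ioi a, y ^ r * Real.exp (-(myG lam y)))
      = a ^ r / myg lam a * Real.exp (-(myG lam a))
        + ∫ y in Ioi a,
            (r * y^(r-1) / myg lam y - y^r * (3*y/4 - lam) / (myg lam y)^2)
              * Real.exp (-(myG lam y)) := by
    have h := integral_sub hψint hfint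
    rw [hFTC] at h
    linarith
  -- J bound
  have hJb : |∫ y in Ioi a,
      (r * y^(r-1) / myg lam y - y^r * (3*y/4 - lam) / (myg lam y)^2)
        * Real.exp (-(myG lam y))|
      ≤ (11*r+121)/a^3 * ∫ y in Ioi a, y ^ r * Real.exp (-(myG lam y)) := by
    calc |∫ y in Ioi a,
        (r * y^(r-1) / myg lam y - y^r * (3*y/4 - lam) / (myg lam y)^2)
          * Real.exp (-(myG lam y))|
        ≤ ∫ y in Ioi a, |(r * y^(r-1) / myg lam y - y^r * (3*y/4 - lam) / (myg lam y)^2)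
            * Real.exp (-(myG lam y))| := by
          rw [← Real.norm_eq_abs]
          exact (norm_integral_le_integral_norm _).trans (le_of_eq (by
            congr 1))
      _ ≤ ∫ y in Ioi a, (11*r+121)/a^3 * (y ^ r * Real.exp (-(myG lam y))) := by
          exact setIntegral_mono_on hψint.abs (hfint.const_mul _) measurableSet_Ioi
            (fun y hy => hψbound y (le_of_lt hy))
      _ = (11*r+121)/a^3 * ∫ y in Ioi a, y ^ r * Real.exp (-(myG lam y)) := by
          rw [integral_const_mul]
  -- crude bound
  have hcrude : (∫ y in Ioi a, y ^ r * Real.exp (-(myG lam y)))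
      ≤ 2^r * (1 + 11^r * Real.Gamma (r+1))
          * (a ^ r / myg lam a * Real.exp (-(myG lam a))) := by
    have hβ : 0 < myg lam a := hgpos a le_rfl
    have hβ11 : 1/11 ≤ myg lam a := by
      have := hglow a le_rfl
      nlinarith
    have hΓ : 0 < Real.Gamma (r+1) := Real.Gamma_pos_of_pos (by linarith)
    have hpt : ∀ y ∈ Ioi a, y ^ r * Real.exp (-(myG lam y)) ≤
        (Real.exp (-(myG lam a)) * a ^ r * 2^r)
          * ((1 + (y-a) ^ r) * Real.exp (-(myg lam a * (y-a)))) := by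
      intro y hy
      have hay : a ≤ y := le_of_lt hy
      have h1 : 1 ≤ y := ha1.trans hay
      have h0 : (0:ℝ) < y := by linarith
      have hs : (0:ℝ) ≤ y - a := by linarith
      have hy_le : y ≤ a * (1 + (y - a)) := by nlinarith
      have h1' : y ^ r ≤ (a * (1 + (y-a))) ^ r := Real.rpow_le_rpow h0.le hy_le hr
      have h2' : (a * (1 + (y-a))) ^ r = a ^ r * (1 + (y-a)) ^ r :=
        Real.mul_rpow ha0.le (by linarith)
      have h3' : (1 + (y-a)) ^ r ≤ 2^r * (1 + (y-a)^r) := my_rpow_add r (y-a) hr hs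
      have h4' : y ^ r ≤ a ^ r * (2^r * (1 + (y-a)^r)) := by
        calc y ^ r ≤ a ^ r * (1 + (y-a)) ^ r := by rw [← h2']; exact h1'
          _ ≤ a ^ r * (2^r * (1 + (y-a)^r)) :=
            mul_le_mul_of_nonneg_left h3' (Real.rpow_nonneg ha0.le r)
      have h5' : Real.exp (-(myG lam y))
          ≤ Real.exp (-(myG lam a)) * Real.exp (-(myg lam a * (y-a))) := by
        rw [← Real.exp_add]
        apply Real.exp_le_exp.2
        have hc := my_Gconv lam a y ha1 ha3 hay
        simp only [myG, myg]
        nlinarith [hc]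
      have hbothnn : (0:ℝ) ≤ a ^ r * (2^r * (1 + (y-a)^r)) := by positivity
      calc y ^ r * Real.exp (-(myG lam y))
          ≤ (a ^ r * (2^r * (1 + (y-a)^r)))
              * (Real.exp (-(myG lam a)) * Real.exp (-(myg lam a * (y-a)))) :=
            mul_le_mul h4' h5' (Real.exp_pos _).le hbothnn
        _ = (Real.exp (-(myG lam a)) * a ^ r * 2^r)
              * ((1 + (y-a) ^ r) * Real.exp (-(myg lam a * (y-a)))) := by ring
    have hbnd_int : IntegrableOn (fun y : ℝ =>
        (Real.exp (-(myG lam a)) * a ^ r * 2^r)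
          * ((1 + (y-a) ^ r) * Real.exp (-(myg lam a * (y-a))))) (Ioi a) :=
      ((my_shift_int (fun s => (1 + s ^ r) * Real.exp (-(myg lam a * s))) a
        (my_int_integrable r (myg lam a) hr hβ)).const_mul _)
    have hIb : (∫ y in Ioi a, y ^ r * Real.exp (-(myG lam y))) ≤
        (Real.exp (-(myG lam a)) * a ^ r * 2^r)
          * (1/(myg lam a) + Real.Gamma (r+1)/(myg lam a)^(r+1)) := by
      calc (∫ y in Ioi a, y ^ r * Real.exp (-(myG lam y)))
          ≤ ∫ y in Ioi a, (Real.exp (-(myG lam a)) * a ^ r * 2^r)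
              * ((1 + (y-a) ^ r) * Real.exp (-(myg lam a * (y-a)))) :=
            setIntegral_mono_on hfint hbnd_int measurableSet_Ioi hpt
        _ = (Real.exp (-(myG lam a)) * a ^ r * 2^r)
              * ∫ y in Ioi a, (1 + (y-a) ^ r) * Real.exp (-(myg lam a * (y-a))) := by
            rw [integral_const_mul]
        _ = (Real.exp (-(myG lam a)) * a ^ r * 2^r)
              * ∫ s in Ioi (0:ℝ), (1 + s ^ r) * Real.exp (-(myg lam a * s)) := by
            rw [my_shift_eq (fun s => (1 + s ^ r) * Real.exp (-(myg lam a * s))) a]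
        _ = (Real.exp (-(myG lam a)) * a ^ r * 2^r)
              * (1/(myg lam a) + Real.Gamma (r+1)/(myg lam a)^(r+1)) := by
            rw [my_int_one_add_val r (myg lam a) hr hβ]
    have hkey : 1/(myg lam a) + Real.Gamma (r+1)/(myg lam a)^(r+1)
        ≤ (1 + 11^r * Real.Gamma (r+1)) / myg lam a := by
      have hβr : ((1:ℝ)/11) ^ r ≤ (myg lam a) ^ r :=
        Real.rpow_le_rpow (by norm_num) hβ11 hr
      have h11r : ((1:ℝ)/11) ^ r = 1 / (11:ℝ) ^ r := by
        rw [Real.div_rpow (by norm_num) (by norm_num), Real.one_rpow]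
      have h11p : (0:ℝ) < (11:ℝ) ^ r := Real.rpow_pos_of_pos (by norm_num) r
      have hβrp : (0:ℝ) < (myg lam a) ^ r := Real.rpow_pos_of_pos hβ r
      have hr1 : (myg lam a) ^ (r+1) = (myg lam a)^r * myg lam a :=
        Real.rpow_add_one hβ.ne' r
      rw [hr1]
      have h2 : (1:ℝ) ≤ 11^r * (myg lam a)^r := by
        have h3 := mul_le_mul_of_nonneg_left hβr (le_of_lt h11p)
        rw [h11r] at h3
        calc (1:ℝ) = (11:ℝ)^r * (1/(11:ℝ)^r) := by field_simp
          _ ≤ 11^r * (myg lam a)^r := h3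
      have h4 : Real.Gamma (r+1) / ((myg lam a)^r * myg lam a)
          ≤ 11^r * Real.Gamma (r+1) / myg lam a := by
        rw [div_le_div_iff₀ (by positivity) hβ]
        nlinarith [mul_pos hΓ hβ, mul_le_mul_of_nonneg_left h2
          (le_of_lt (mul_pos hΓ hβ))]
      have h5 : (1 + 11^r * Real.Gamma (r+1)) / myg lam a
          = 1/myg lam a + 11^r * Real.Gamma (r+1) / myg lam a := by ring
      rw [h5]
      linarith
    calc (∫ y in Ioi a, y ^ r * Real.exp (-(myG lam y)))
        ≤ (Real.exp (-(myG lam a)) * a ^ r * 2^r)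
            * (1/(myg lam a) + Real.Gamma (r+1)/(myg lam a)^(r+1)) := hIb
      _ ≤ (Real.exp (-(myG lam a)) * a ^ r * 2^r)
            * ((1 + 11^r * Real.Gamma (r+1)) / myg lam a) :=
          mul_le_mul_of_nonneg_left hkey (by positivity)
      _ = 2^r * (1 + 11^r * Real.Gamma (r+1))
            * (a ^ r / myg lam a * Real.exp (-(myG lam a))) := by ring
  exact ⟨_, hsplit, hJb, hcrude⟩

/-- For `G_λ(y) = y³/8 − λy²/2 + λ²y/2` and any fixed `r ≥ 0` there is a
constant `C(r)` such that for all `λ` and all `a ≥ max(1, 3λ)`,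
`∫_a^∞ y^r e^{−G_λ(y)} dy = (a^r/G_λ'(a)) e^{−G_λ(a)} (1+E)` with `|E| ≤ C(r)/a³`. -/
theorem stmt8 (r : ℝ) (hr : 0 ≤ r) : ∃ C : ℝ, 0 < C ∧ ∀ lam a : ℝ,
    max 1 (3 * lam) ≤ a →
    ∃ E : ℝ, |E| ≤ C / a ^ 3 ∧
      (∫ y in Set.Ioi a, y ^ r * Real.exp (-(y ^ 3 / 8 - lam * y ^ 2 / 2 + lam ^ 2 * y / 2)))
        = a ^ r / (3 * a ^ 2 / 8 - lam * a + lam ^ 2 / 2) *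
            Real.exp (-(a ^ 3 / 8 - lam * a ^ 2 / 2 + lam ^ 2 * a / 2)) * (1 + E) := by
  have hΓ : 0 < Real.Gamma (r+1) := Real.Gamma_pos_of_pos (by linarith)
  have hc2 : (0:ℝ) < 2^r * (1 + 11^r * Real.Gamma (r+1)) := by positivity
  have hK : (0:ℝ) < 11*r + 121 := by linarith
  refine ⟨(11*r+121) * (2^r * (1 + 11^r * Real.Gamma (r+1))), mul_pos hK hc2,
    fun lam a ha => ?_⟩
  have ha1 : 1 ≤ a := le_trans (le_max_left _ _) ha
  have ha3 : 3*lam ≤ a := le_trans (le_max_right _ _) ha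
  have ha0 : (0:ℝ) < a := by linarith
  obtain ⟨J, hEq, hJ, hCr⟩ := master r hr lam a ha1 ha3
  simp only [myG, myg] at hEq hJ hCr
  have hga : (0:ℝ) < 3 * a ^ 2 / 8 - lam * a + lam ^ 2 / 2 := by
    nlinarith [sq_nonneg (a - 3*lam), sq_nonneg lam, sq_nonneg (a - lam)]
  have har : (0:ℝ) < a ^ r := Real.rpow_pos_of_pos ha0 r
  set L : ℝ := a ^ r / (3 * a ^ 2 / 8 - lam * a + lam ^ 2 / 2) *
      Real.exp (-(a ^ 3 / 8 - lam * a ^ 2 / 2 + lam ^ 2 * a / 2)) with hLdef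
  have hL : (0:ℝ) < L := by rw [hLdef]; positivity
  refine ⟨J / L, ?_, ?_⟩
  · rw [abs_div, abs_of_pos hL, div_le_div_iff₀ hL (by positivity)]
    have hJ2 : |J| ≤ (11*r+121)/a^3 * ((2^r * (1 + 11^r * Real.Gamma (r+1))) * L) :=
      hJ.trans (mul_le_mul_of_nonneg_left hCr (by positivity))
    have h4 : (11*r+121)/a^3 * ((2^r * (1 + 11^r * Real.Gamma (r+1))) * L) * a^3
        = (11*r+121) * (2^r * (1 + 11^r * Real.Gamma (r+1))) * L := by
      field_simp
    calc |J| * a ^ 3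
        ≤ (11*r+121)/a^3 * ((2^r * (1 + 11^r * Real.Gamma (r+1))) * L) * a^3 :=
          mul_le_mul_of_nonneg_right hJ2 (by positivity)
      _ = (11*r+121) * (2^r * (1 + 11^r * Real.Gamma (r+1))) * L := h4
  · rw [hEq, mul_add, mul_one, mul_div_cancel₀ J hL.ne']
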